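/- Let V be a real vector space and let a, b : V × V → ℝ be symmetric bilinear forms. Let u, u_h, w ∈ V and λ, λ_h ∈ ℝ satisfy b(u,u) = 1, b(u_h,u_h) = 1, a(u,u) = λ, a(u_h,u_h) = λ_h, and a(w − u_h, u_h) = λ_h b(w − u_h, u_h). Then λ − λ_h = a(u − u_h, u − u_h) − λ_h b(u − u_h, u − u_h) + 2 a(u − w, u_h) − 2 λ_h b(u − w, u_h). -/
import Mathlib

/-- Lemma 3.1 in abstract form: the eigenvalue error identity (3.2). -/
theorem stmt_3 {V : Type*} [AddCommGroup V] [Module ℝ V]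
    (a b : V →ₗ[ℝ] V →ₗ[ℝ] ℝ)
    (ha : ∀ x y : V, a x y = a y x) (hb : ∀ x y : V, b x y = b y x)
    (u u_h w : V) (lam lam_h : ℝ)
    (hbu : b u u = 1) (hbuh : b u_h u_h = 1)
    (hau : a u u = lam) (hauh : a u_h u_h = lam_h)
    (hgal : a (w - u_h) u_h = lam_h * b (w - u_h) u_h) :
    lam - lam_h =
      a (u - u_h) (u - u_h) - lam_h * b (u - u_h) (u - u_h)
        + 2 * a (u - w) u_h - 2 * lam_h * b (u - w) u_h := by
  simp only [map_sub, LinearMap.sub_apply] at *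
  rw [ha u u_h, hb u u_h] at *
  linear_combination -hau + hauh + lam_h * hbu - lam_h * hbuh + 2 * hgal
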